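/- For an idempotent jump operator j on a relative pca, the (P_j, j)-realizable partial multifunctions coincide exactly with the (P, j)-realizable partial multifunctions. -/

import Mathlib

open scoped Classical

noncomputable section

/-- Baire space. -/
abbrev Baire : Type := ℕ → ℕ

/-- A partial multifunction with explicit domain. -/
structure MultiFn (α : Type*) where
  Dom : Set α
  val : α → Set α

/-- The length-`k` prefix of `x` as a list. -/
def prefixList (x : Baire) (k : ℕ) : List ℕ := List.ofFn fun i : Fin k => x i

/-- The raw behaviour of the (code of a) partial continuous function `t` on the
finite input `l` at position `n`. -/
def raw (t : Baire) (l : List ℕ) (n : ℕ) : Option ℕ :=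
  match t (Nat.pair (Encodable.encode l) n) with
  | 0 => none
  | Nat.succ v => some v

/-- `evalB t x y` : the partial (continuous) function coded by `t` is defined at `x`
with value `y`; each value `y n` is read off at the minimal prefix of `x` on which
the code converges. Every such function is continuous, and every partial continuous
function on Baire space arises this way. -/
def evalB (t x y : Baire) : Prop :=
  ∀ n, ∃ k, raw t (prefixList x k) n = some (y n) ∧
    ∀ j < k, raw t (prefixList x j) n = none

/-- Pairing on Baire space. -/
def pairB (x y : Baire) : Baire := fun n => Nat.pair (x n) (y n)

def fstB (z : Baire) : Baire := fun n => (Nat.unpair (z n)).1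

def sndB (z : Baire) : Baire := fun n => (Nat.unpair (z n)).2

/-- Weihrauch reduction of `f` to `g` witnessed by an inner reduction (code) `h`
and an outer reduction (code) `k`. -/
def WRedBy (f g : MultiFn Baire) (h k : Baire) : Prop :=
  ∀ x ∈ f.Dom, ∃ hx, evalB h x hx ∧ hx ∈ g.Dom ∧
    ∀ y ∈ g.val hx, ∃ z, evalB k (pairB x y) z ∧ z ∈ f.val x

/-- Weihrauch reducibility (computable reductions). -/
def WRed (f g : MultiFn Baire) : Prop :=
  ∃ h k : Baire, Computable h ∧ Computable k ∧ WRedBy f g h k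

/-- Continuous Weihrauch reducibility. -/
def WRedC (f g : MultiFn Baire) : Prop := ∃ h k : Baire, WRedBy f g h k

/-- Weihrauch equivalence. -/
def WEquiv (f g : MultiFn Baire) : Prop := WRed f g ∧ WRed g f

/-! ## Reduction games -/

/-- Merge a finite list of Baire points into a single Baire point. -/
def mergeList (l : List Baire) : Baire := fun n =>
  if n = 0 then l.length
  else l.getD (Nat.unpair (n - 1)).1 (fun _ => 0) (Nat.unpair (n - 1)).2

/-- Encode a move of Player II (a flag together with a Baire point) as a Baire point;
the flag `true` means "declare victory", `false` means "query". -/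
def encodeMove (m : Bool × Baire) : Baire := fun n =>
  if n = 0 then (if m.1 then 1 else 0) else m.2 (n - 1)

/-- `τ` is a (total continuous) strategy for Player II coded by the Baire point `t`. -/
def StrategyCoded (t : Baire) (τ : List Baire → Bool × Baire) : Prop :=
  ∀ l : List Baire, evalB t (mergeList l) (encodeMove (τ l))

/-- The history of the play where Player I uses `σ` and Player II uses `τ`:
after round `n`, the lists of the moves of I and of II so far. Player I's
first move is `σ []`. -/
def hist (σ : List (Bool × Baire) → Baire) (τ : List Baire → Bool × Baire) :
    ℕ → List Baire × List (Bool × Baire)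
  | 0 => ([σ []], [τ [σ []]])
  | n + 1 =>
    let h := hist σ τ n
    let x := σ h.2
    (h.1 ++ [x], h.2 ++ [τ (h.1 ++ [x])])

/-- Player I's move at round `n`. -/
def xmove (σ : List (Bool × Baire) → Baire) (τ : List Baire → Bool × Baire)
    (n : ℕ) : Baire :=
  (hist σ τ n).1.getD n (fun _ => 0)

/-- Player II's move at round `n`. -/
def ymove (σ : List (Bool × Baire) → Baire) (τ : List Baire → Bool × Baire)
    (n : ℕ) : Bool × Baire :=
  (hist σ τ n).2.getD n (true, fun _ => 0)

/-- Player I violates the rules of the game `G(f,g)` at round `m`. -/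
def IViol (f g : MultiFn Baire) (σ : List (Bool × Baire) → Baire)
    (τ : List Baire → Bool × Baire) (m : ℕ) : Prop :=
  (m = 0 ∧ xmove σ τ 0 ∉ f.Dom) ∨
  (∃ m', m = m' + 1 ∧ (ymove σ τ m').1 = false ∧
    xmove σ τ m ∉ g.val (ymove σ τ m').2)

/-- Player II violates the rules of the game `G(f,g)` at round `m`
(II queried something outside the domain of `g`). -/
def IIViol (g : MultiFn Baire) (σ : List (Bool × Baire) → Baire)
    (τ : List Baire → Bool × Baire) (m : ℕ) : Prop :=
  (ymove σ τ m).1 = false ∧ (ymove σ τ m).2 ∉ g.Dom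

/-- Player II wins the play of `G(f,g)` determined by `σ` and `τ` :
either I violates the rules before II does, or II obeys the rules and
declares victory with an element of `f(x₀)`. -/
def IIWinsPlay (f g : MultiFn Baire) (σ : List (Bool × Baire) → Baire)
    (τ : List Baire → Bool × Baire) : Prop :=
  (∃ m, IViol f g σ τ m ∧ ∀ k < m, ¬ IIViol g σ τ k) ∨
  (∃ m, (∀ k < m, (ymove σ τ k).1 = false) ∧ (ymove σ τ m).1 = true ∧
    (∀ k ≤ m, ¬ IIViol g σ τ k) ∧ (ymove σ τ m).2 ∈ f.val (xmove σ τ 0))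

/-- Generalized Weihrauch reducibility: Player II has a computable winning
strategy in the reduction game `G(f,g)`. -/
def GWRed (f g : MultiFn Baire) : Prop :=
  ∃ (t : Baire) (τ : List Baire → Bool × Baire),
    Computable t ∧ StrategyCoded t τ ∧ ∀ σ, IIWinsPlay f g σ τ

/-- Continuous generalized Weihrauch reducibility: Player II has a continuous
winning strategy in the reduction game `G(f,g)`. -/
def GWRedC (f g : MultiFn Baire) : Prop :=
  ∃ (t : Baire) (τ : List Baire → Bool × Baire),
    StrategyCoded t τ ∧ ∀ σ, IIWinsPlay f g σ τ

/-- The multifunction `g^Game` arising from the reduction game for `g`: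
an input encodes a pair `(x₀, t)` where `t` codes a strategy `τ` for Player II
which declares victory against every play of Player I with first move `x₀`;
outputs are the values with which II declares victory along some such play. -/
def gameOf (g : MultiFn Baire) : MultiFn Baire where
  Dom := {z | ∃ τ, StrategyCoded (sndB z) τ ∧
    ∀ σ, σ [] = fstB z → ∃ m, (ymove σ τ m).1 = true}
  val := fun z => {u | ∃ τ, StrategyCoded (sndB z) τ ∧
    ∃ σ, σ [] = fstB z ∧ ∃ m, (ymove σ τ m).1 = true ∧ (ymove σ τ m).2 = u}

/-! ## Compositional products, parallelizations, coproducts -/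

/-- Composition of partial multifunctions. -/
def mcomp (h g : MultiFn Baire) : MultiFn Baire where
  Dom := {x | x ∈ g.Dom ∧ g.val x ⊆ h.Dom}
  val := fun x => ⋃ y ∈ g.val x, h.val y

/-- `s` is a compositional product `h ⋆ g` : a Weihrauch-minimal element of the
set of compositions `h₀ ∘ g₀` with `g₀ ≤_W g` and `h₀ ≤_W h`. -/
def IsCompProd (h g s : MultiFn Baire) : Prop :=
  (∃ g₀ h₀, WRed g₀ g ∧ WRed h₀ h ∧ WEquiv s (mcomp h₀ g₀)) ∧
  (∀ g₀ h₀, WRed g₀ g → WRed h₀ h → WRed s (mcomp h₀ g₀))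

def tupLen (z : Baire) : ℕ := z 0

def tupProj (z : Baire) (i : ℕ) : Baire := fun m => z (Nat.pair i m + 1)

/-- Finite parallelization `f*`. -/
def finPar (f : MultiFn Baire) : MultiFn Baire where
  Dom := {z | ∀ i < tupLen z, tupProj z i ∈ f.Dom}
  val := fun z => {w | tupLen w = tupLen z ∧
    ∀ i < tupLen z, tupProj w i ∈ f.val (tupProj z i)}

/-- Product of two multifunctions. -/
def prodMF (f g : MultiFn Baire) : MultiFn Baire where
  Dom := {z | fstB z ∈ f.Dom ∧ sndB z ∈ g.Dom}
  val := fun z => {w | fstB w ∈ f.val (fstB z) ∧ sndB w ∈ g.val (sndB z)}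

def tailB (z : Baire) : Baire := fun n => z (n + 1)

/-- Coproduct (disjoint union) of a sequence of multifunctions. -/
def coprod (s : ℕ → MultiFn Baire) : MultiFn Baire where
  Dom := {z | tailB z ∈ (s (z 0)).Dom}
  val := fun z => (s (z 0)).val (tailB z)

/-- The identity multifunction (the Weihrauch degree `1`). -/
def idMF : MultiFn Baire := ⟨Set.univ, fun x => {x}⟩

/-! ## Trees -/

def IsTree (T : Set (List Bool)) : Prop := ∀ σ ∈ T, ∀ τ, τ <+: σ → τ ∈ T

def InfTree (T : Set (List Bool)) : Prop := ∀ ℓ, ∃ σ ∈ T, σ.length = ℓ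

def IsPathOf (T : Set (List Bool)) (p : ℕ → Bool) : Prop :=
  ∀ n, (List.ofFn fun i : Fin n => p i) ∈ T

/-- An all-or-unique tree: at each level, either all strings or exactly one. -/
def AouTree (T : Set (List Bool)) : Prop :=
  IsTree T ∧ ∀ ℓ, ({σ | σ ∈ T ∧ σ.length = ℓ} = {σ : List Bool | σ.length = ℓ} ∨
    ∃ σ₀, {σ | σ ∈ T ∧ σ.length = ℓ} = {σ₀})

/-- A 2-tree: exactly two nodes at each (positive) level. -/
def TwoTree (T : Set (List Bool)) : Prop :=
  IsTree T ∧ ∀ ℓ > 0, ∃ a b : List Bool, a ≠ b ∧ {σ | σ ∈ T ∧ σ.length = ℓ} = {a, b}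

def BranchNodes (T : Set (List Bool)) : Set (List Bool) :=
  {σ | σ ++ [false] ∈ T ∧ σ ++ [true] ∈ T}

/-- A rational 2-tree: a 2-tree with only finitely many branching nodes. -/
def RatTwoTree (T : Set (List Bool)) : Prop := TwoTree T ∧ (BranchNodes T).Finite

/-- A basic clopen tree: the set of strings comparable with a fixed string. -/
def BasicClopenTree (T : Set (List Bool)) : Prop :=
  ∃ σ : List Bool, T = {τ | τ <+: σ ∨ σ <+: τ}

/-- A Baire point codes a tree by its characteristic function. -/
def treeOf (x : Baire) : Set (List Bool) := {σ | x (Encodable.encode σ) = 1}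

/-- A Baire point codes an infinite binary sequence. -/
def pathOf (y : Baire) : ℕ → Bool := fun n => y n != 0

/-- Weak König's lemma restricted to the class `C` of trees, as a multifunction. -/
def WKLof (C : Set (List Bool) → Prop) : MultiFn Baire where
  Dom := {x | C (treeOf x) ∧ InfTree (treeOf x)}
  val := fun x => {y | IsPathOf (treeOf x) (pathOf y)}

def WKL : MultiFn Baire := WKLof IsTree
def WKLle2 : MultiFn Baire := WKLof TwoTree
def WKLeq2 : MultiFn Baire := WKLof RatTwoTree
def WKLaou : MultiFn Baire := WKLof AouTree
def WKLclop : MultiFn Baire := WKLof BasicClopenTree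

/-! ## Arithmetical principles as multifunctions -/

/-- The discrete limit operator on ℕ. -/
def LimN : MultiFn Baire where
  Dom := {x | ∃ v N, ∀ n ≥ N, x n = v}
  val := fun x => {u | ∃ v, (∀ m, u m = v) ∧ ∃ N, ∀ n ≥ N, x n = v}

/-- `Σ⁰₂` double negation elimination, as a multifunction: the input codes a
decidable relation `R(n,m) ≡ α(⟨n,m⟩) = 0` with `¬¬∃n∀m R(n,m)`; outputs code
some `n` with `∀m R(n,m)`. -/
def DNE2 : MultiFn Baire where
  Dom := {α | ¬¬ ∃ n, ∀ m, α (Nat.pair n m) = 0}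
  val := fun α => {u | ∃ n, (∀ m, u m = n) ∧ ∀ m, α (Nat.pair n m) = 0}

/-- Ramsey's theorem for singletons and two colours. -/
def RT12 : MultiFn Baire where
  Dom := {c | ∀ n, c n ≤ 1}
  val := fun c => {h | (∀ n, h n ≤ 1) ∧ {n | h n = 1}.Infinite ∧
    ∃ i, ∀ n, h n = 1 → c n = i}

/-- The `i`-th `Σ⁰₂` statement coded by `α`. -/
def Sig2 (α : Baire) (i : ℕ) : Prop := ∃ a, ∀ b, α (Nat.pair i (Nat.pair a b)) = 0

/-- `Σ⁰₂` de Morgan's law, as a multifunction. -/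
def DML2 : MultiFn Baire where
  Dom := {α | ¬ (Sig2 α 0 ∧ Sig2 α 1)}
  val := fun α => {u | ∃ j ≤ 1, (∀ m, u m = j) ∧ ¬ Sig2 α j}

/-- The limited principle of omniscience. -/
def LPO : MultiFn Baire where
  Dom := Set.univ
  val := fun p => {u | ((∀ n, u n = 0) ∧ ∀ n, p n = 0) ∨
    ((∀ n, u n = 1) ∧ ∃ n, p n ≠ 0)}

/-- A semicontinuous bound for a (finite-valued) multifunction `f`: a partial
continuous `g` (coded by `t`) and a lower semicontinuous `b` such that
`f(x) ⊆ {g(x,n) : n < b(x)}`. -/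
def SemicontBound (f : MultiFn Baire) : Prop :=
  ∃ (t : Baire) (b : Baire → ℕ), LowerSemicontinuousOn b f.Dom ∧
    ∀ x ∈ f.Dom, f.val x ⊆ {y | ∃ n < b x, evalB t (pairB x (fun _ => n)) y}

/-! ## Relative partial combinatory algebras and jump operators -/

def app2 {α : Type*} (m : α → α → Option α) (a b c : α) : Option α :=
  (m a b).bind fun ab => m ab c

/-- `(P, α, m)` is a relative partial combinatory algebra: there are combinators
`k, s ∈ P` (shared by the lightface part `P` and the boldface part `α`), `P` is
closed under the application, and `k`, `s` satisfy the usual specifications. -/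
def IsRelPCA {α : Type*} (m : α → α → Option α) (P : Set α) : Prop :=
  ∃ k ∈ P, ∃ s ∈ P,
    (∀ a ∈ P, ∀ b ∈ P, ∀ c, m a b = some c → c ∈ P) ∧
    (∀ a b : α, app2 m k a b = some a) ∧
    (∀ a b : α, ∃ c, app2 m s a b = some c) ∧
    (∀ a b c : α, (app2 m s a b).bind (fun x => m x c) =
      (m a c).bind fun ac => (m b c).bind fun bc => m ac bc)

/-- Composition of set-valued maps (empty value = undefined). -/
def mcompSet {α : Type*} (j₁ j₂ : α → Set α) (x : α) : Set α :=
  {z | (∀ y ∈ j₂ x, (j₁ y).Nonempty) ∧ ∃ y ∈ j₂ x, z ∈ j₁ y}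

/-- `j` is an idempotent jump operator on the relative pca `(P, α, m)`. -/
def IdempotentJump {α : Type*} (m : α → α → Option α) (P : Set α)
    (j : α → Set α) : Prop :=
  (∃ u ∈ P, ∀ a x : α, ∃ w, app2 m u a x = some w ∧
    j w = {z | ∃ y ∈ j x, m a y = some z}) ∧
  (∃ ι ∈ P, ∀ x : α, ∃ w, m ι x = some w ∧ j w = {x}) ∧
  (∃ jj ∈ P, ∀ x : α, ∃ w, m jj x = some w ∧ j w = mcompSet j j x)

/-- `P_j = {a' : a ∈ P, j(a) = {a'}}`. -/
def Pjump {α : Type*} (P : Set α) (j : α → Set α) : Set α :=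
  {a' | ∃ a ∈ P, j a = {a'}}

/-- The new application `a ∗_j b = a' ∗ b` where `j(a) = {a'}`. -/
def appJ {α : Type*} (m : α → α → Option α) (j : α → Set α) (a b : α) : Option α :=
  if h : ∃ a', j a = {a'} then m h.choose b else none

/-- `f` is `(Q, j)`-realizable: some `a ∈ Q` satisfies `j(a x) ⊆ f(x)` for all
`x ∈ dom f`. -/
def JRealizable {α : Type*} (m : α → α → Option α) (Q : Set α) (j : α → Set α)
    (f : MultiFn α) : Prop :=
  ∃ a ∈ Q, ∀ x ∈ f.Dom, ∃ w, m a x = some w ∧ (j w).Nonempty ∧ j w ⊆ f.val x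

/-- The Kleene second algebra application. -/
def k2app (p x : Baire) : Option Baire :=
  if h : ∃ y, evalB p x y then some h.choose else none

/-- The lightface part of the Kleene–Vesley algebra: the computable points. -/
def KVP : Set Baire := {p | Computable p}

/-! ## Real-number principles -/

/-- A regular Cauchy sequence of rationals: `|q n - q m| < 2⁻ⁿ` for `m ≥ n`. -/
def RegCauchy (q : ℕ → ℚ) : Prop := ∀ n m, n ≤ m → |q n - q m| < ((2 : ℚ) ^ n)⁻¹

/-- `x` is the limit of the rational sequence `q`. -/
def limOf (q : ℕ → ℚ) (x : ℝ) : Prop :=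
  Filter.Tendsto (fun n => (q n : ℝ)) Filter.atTop (nhds x)

/-- The real with binary expansion `f`. -/
def binExp (f : ℕ → Bool) : ℝ := ∑' n, if f n then ((2 : ℝ)⁻¹) ^ (n + 1) else 0

/-- `x` is not irrational (stated negatively, as in `BE_ℚ`). -/
def NotIrrational (x : ℝ) : Prop := ¬ ∀ a b : ℤ, a ≠ 0 → (a : ℝ) * x ≠ (b : ℝ)

/-- The binary expansion principle for regular Cauchy rationals. -/
def BEQProp : Prop :=
  ∀ (q : ℕ → ℚ) (x : ℝ), RegCauchy q → limOf q x → x ∈ Set.Icc (0 : ℝ) 1 →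
    NotIrrational x → ∃ f : ℕ → Bool, x = binExp f

/-- Decode a Baire point as a sequence of rationals. -/
def qOf (z : Baire) (n : ℕ) : ℚ := ((Encodable.decode (z n) : Option ℚ)).getD 0

/-- `BE_ℚ` as a multifunction. -/
def BEQmf : MultiFn Baire where
  Dom := {z | RegCauchy (qOf z) ∧
    ∃ x, limOf (qOf z) x ∧ x ∈ Set.Icc (0 : ℝ) 1 ∧ NotIrrational x}
  val := fun z => {y | ∀ x, limOf (qOf z) x → x = binExp (pathOf y)}

/-- `f` is the rational piecewise linear map through the points listed in `l`. -/
def Interp (l : List (ℚ × ℚ)) (f : ℝ → ℝ) : Prop :=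
  (l.map Prod.fst).Pairwise (· < ·) ∧
  (∀ p ∈ l, f (p.1 : ℝ) = (p.2 : ℝ)) ∧
  ∀ i, i + 1 < l.length → ∀ t ∈ Set.Icc (0 : ℝ) 1,
    f ((1 - t) * ((l.getD i (0, 0)).1 : ℝ) + t * ((l.getD (i + 1) (0, 0)).1 : ℝ)) =
      (1 - t) * ((l.getD i (0, 0)).2 : ℝ) + t * ((l.getD (i + 1) (0, 0)).2 : ℝ)

/-- Every point of `l` lies in the `2^{-s-1}`-neighbourhood of the graph of `f`. -/
def ApproxStep (l : List (ℚ × ℚ)) (f : ℝ → ℝ) (s : ℕ) : Prop :=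
  ∀ p ∈ l, ∃ x : ℝ, |(p.1 : ℝ) - x| < (2 : ℝ)⁻¹ ^ (s + 1) ∧
    |(p.2 : ℝ) - f x| < (2 : ℝ)⁻¹ ^ (s + 1)

/-- The intermediate value theorem for rational piecewise linear maps given as
discrete limits. -/
def IVTlinProp : Prop :=
  ∀ (c : ℕ → List (ℚ × ℚ)) (f : ℕ → ℝ → ℝ),
    (∀ s, Interp (c s) (f s)) →
    (∀ s, ApproxStep (c (s + 1)) (f s) s) →
    (¬ ∀ s, ∃ t > s, c t ≠ c s) →
    ∀ s₀, (∀ s ≥ s₀, c s = c s₀) →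
      f s₀ 0 < 0 → 0 < f s₀ 1 → ∃ x ∈ Set.Icc (0 : ℝ) 1, f s₀ x = 0

/-- Decode a Baire point as a sequence of finite lists of rational points. -/
def cOf (z : Baire) (n : ℕ) : List (ℚ × ℚ) :=
  ((Encodable.decode (z n) : Option (List (ℚ × ℚ)))).getD []

/-- `IVT_lin` as a multifunction: the input codes a discrete-limit approximation
of a rational piecewise linear map with a sign change, and outputs are regular
Cauchy names of zeros. -/
def IVTlinMF : MultiFn Baire where
  Dom := {z | (∀ s, ∃ fs : ℝ → ℝ, Interp (cOf z s) fs) ∧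
    (∀ s, ∀ fs : ℝ → ℝ, Interp (cOf z s) fs → ApproxStep (cOf z (s + 1)) fs s) ∧
    (¬ ∀ s, ∃ t > s, cOf z t ≠ cOf z s) ∧
    (∀ s₀, (∀ s ≥ s₀, cOf z s = cOf z s₀) → ∀ g : ℝ → ℝ, Interp (cOf z s₀) g →
      g 0 < 0 ∧ 0 < g 1)}
  val := fun z => {y | RegCauchy (qOf y) ∧
    ∀ s₀, (∀ s ≥ s₀, cOf z s = cOf z s₀) → ∀ g : ℝ → ℝ, Interp (cOf z s₀) g →
      ∃ x, limOf (qOf y) x ∧ x ∈ Set.Icc (0 : ℝ) 1 ∧ g x = 0}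


/-- The `(P_j, j)`-realizable partial multifunctions coincide
with the `(P, j)`-realizable ones. -/
theorem pj_realizable_iff {α : Type*} (m : α → α → Option α) (P : Set α)
    (j : α → Set α) (hpca : IsRelPCA m P) (hj : IdempotentJump m P j)
    (f : MultiFn α) :
    JRealizable m (Pjump P j) j f ↔ JRealizable m P j f := by
  obtain ⟨k, hkP, s, hsP, hcl, hk, hstot, hs⟩ := hpca
  obtain ⟨⟨u, huP, hu⟩, ⟨ι, hιP, hι⟩, ⟨jj, hjjP, hjj⟩⟩ := hj
  -- `k` applied to one argument
  have hk1 : ∀ a : α, ∃ ka, m k a = some ka ∧ ∀ b, m ka b = some a := by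
    intro a
    have h := hk a a
    unfold app2 at h
    obtain ⟨ka, hka, _⟩ := Option.bind_eq_some_iff.mp h
    refine ⟨ka, hka, fun b => ?_⟩
    have h2 := hk a b
    unfold app2 at h2
    rw [hka] at h2
    simpa using h2
  -- `s` applied to two arguments
  have hs1 : ∀ a b : α, ∃ sa sab, m s a = some sa ∧ m sa b = some sab ∧
      ∀ c, m sab c = (m a c).bind fun ac => (m b c).bind fun bc => m ac bc := by
    intro a b
    obtain ⟨sab, hsab⟩ := hstot a b
    have hsab' := hsab
    unfold app2 at hsab'
    obtain ⟨sa, hsa, hsa2⟩ := Option.bind_eq_some_iff.mp hsab'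
    refine ⟨sa, sab, hsa, hsa2, fun c => ?_⟩
    have h3 := hs a b c
    rw [hsab] at h3
    simpa using h3
  constructor
  · -- hard direction: from `P_j`-realizer to `P`-realizer
    rintro ⟨a', ⟨a, haP, hja⟩, hreal⟩
    -- the identity combinator
    obtain ⟨sk, i, hsk, hski, hi0⟩ := hs1 k k
    have hiP : i ∈ P := hcl sk (hcl s hsP k hkP sk hsk) k hkP i hski
    have hi : ∀ y, m i y = some y := by
      intro y
      obtain ⟨ky, hky, hky2⟩ := hk1 y
      rw [hi0 y, hky]
      simpa using hky2 ky
    -- E = s · i (first stage)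
    obtain ⟨E, _, hE, hED0, _⟩ := hs1 i i
    have hEP : E ∈ P := hcl s hsP i hiP E hE
    -- constant combinators
    obtain ⟨kE, hkE, hkE2⟩ := hk1 E
    have hkEP : kE ∈ P := hcl k hkP E hEP kE hkE
    obtain ⟨ku, hku, hku2⟩ := hk1 u
    have hkuP : ku ∈ P := hcl k hkP u huP ku hku
    obtain ⟨ka, hka, hka2⟩ := hk1 a
    have hkaP : ka ∈ P := hcl k hkP a haP ka hka
    obtain ⟨kjj, hkjj, hkjj2⟩ := hk1 jj
    have hkjjP : kjj ∈ P := hcl k hkP jj hjjP kjj hkjj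
    -- t2 = s (k E) k  :  t2 x = E (k x) = s i (k x)
    obtain ⟨skE, t2, hskE, hskE2, ht2⟩ := hs1 kE k
    have ht2P : t2 ∈ P := hcl skE (hcl s hsP kE hkEP skE hskE) k hkP t2 hskE2
    -- t3 = s (k u) t2  :  t3 x = u (t2 x)
    obtain ⟨sku, t3, hsku, hsku2, ht3⟩ := hs1 ku t2
    have ht3P : t3 ∈ P := hcl sku (hcl s hsP ku hkuP sku hsku) t2 ht2P t3 hsku2
    -- t4 = s t3 (k a)  :  t4 x = (t3 x) a
    obtain ⟨st3, t4, hst3, hst32, ht4⟩ := hs1 t3 ka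
    have ht4P : t4 ∈ P := hcl st3 (hcl s hsP t3 ht3P st3 hst3) ka hkaP t4 hst32
    -- t5 = s (k jj) t4  :  t5 x = jj (t4 x)
    obtain ⟨skjj, t5, hskjj, hskjj2, ht5⟩ := hs1 kjj t4
    have ht5P : t5 ∈ P := hcl skjj (hcl s hsP kjj hkjjP skjj hskjj) t4 ht4P t5 hskjj2
    refine ⟨t5, ht5P, fun x hx => ?_⟩
    obtain ⟨w₀, hw₀, hne, hsub⟩ := hreal x hx
    obtain ⟨kx, hkx, hkx2⟩ := hk1 x
    -- D = s i (k x)  :  D y = y x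
    obtain ⟨E', D, hE', hE'D, hD⟩ := hs1 i kx
    have hEE : E' = E := Option.some.inj (hE'.symm.trans hE)
    -- D a' = a' x = w₀
    have hDa' : m D a' = some w₀ := by
      rw [hD a', hi a', Option.bind_some, hkx2 a', Option.bind_some]
      exact hw₀
    -- w₁ = u D a, with j w₁ = {w₀}
    obtain ⟨w₁, hw₁app, hw₁j⟩ := hu D a
    have hjw₁ : j w₁ = {w₀} := by
      rw [hw₁j]
      ext z
      simp only [Set.mem_setOf_eq, Set.mem_singleton_iff, hja]
      constructor
      · rintro ⟨y, hy, hyz⟩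
        subst hy
        rw [hDa'] at hyz
        exact (Option.some.inj hyz).symm
      · rintro rfl
        exact ⟨a', rfl, hDa'⟩
    obtain ⟨uD, huD, huD2⟩ := by
      have h := hw₁app
      unfold app2 at h
      exact Option.bind_eq_some_iff.mp h
    -- w₂ = jj w₁
    obtain ⟨w₂, hw₂, hw₂j⟩ := hjj w₁
    -- computation of t5 x
    have ht2x : m t2 x = some D := by
      rw [ht2 x, hkE2 x, Option.bind_some, hkx, Option.bind_some, ← hEE]
      exact hE'D
    have ht3x : m t3 x = some uD := by
      rw [ht3 x, hku2 x, Option.bind_some, ht2x, Option.bind_some]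
      exact huD
    have ht4x : m t4 x = some w₁ := by
      rw [ht4 x, ht3x, Option.bind_some, hka2 x, Option.bind_some]
      exact huD2
    have ht5x : m t5 x = some w₂ := by
      rw [ht5 x, hkjj2 x, Option.bind_some, ht4x, Option.bind_some]
      exact hw₂
    -- j w₂ = j w₀
    have hjw₂ : j w₂ = j w₀ := by
      rw [hw₂j]
      ext z
      simp only [mcompSet, Set.mem_setOf_eq, hjw₁, Set.mem_singleton_iff]
      constructor
      · rintro ⟨-, y, rfl, hzy⟩
        exact hzy
      · intro hz
        exact ⟨fun y hy => hy ▸ hne, w₀, rfl, hz⟩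
    refine ⟨w₂, ht5x, ?_, ?_⟩
    · rw [hjw₂]; exact hne
    · rw [hjw₂]; exact hsub
  · -- easy direction: `P ⊆ P_j` up to the inclusion `ι`
    rintro ⟨a, haP, hreal⟩
    obtain ⟨w, hw, hjw⟩ := hι a
    exact ⟨a, ⟨w, hcl ι hιP a haP w hw, hjw⟩, hreal⟩

end
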